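/- Let ε_n be a sequence of positive reals with Σ ε_n < ∞. Let X, Y be Banach spaces, (A_n) an increasing sequence of closed subspaces of X with dense union, (B_n) an increasing sequence of closed subspaces of Y with dense union, and f_n : A_n → B_n, g_n : B_n → A_{n+1} linear maps of norm at most 1 satisfying ‖g_n(f_n a) − a‖ ≤ ε_n‖a‖ for all a ∈ A_n, ‖f_{n+1}(g_n b) − b‖ ≤ ε_n‖b‖ for all b ∈ B_n, and such that ‖f_{n+1}|_{A_n} − f_n‖ ≤ 2ε_n and ‖g_{n+1}|_{B_n} − g_n‖ ≤ 2ε_n. Then the maps f_n converge pointwise on ∪A_n to a map extending to a linear bijective isometry f_∞ : X → Y, with inverse similarly obtained from the g_n. -/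

import Mathlib

open Filter Topology

set_option maxHeartbeats 1600000

/-- a back-and-forth system of almost-isometries between dense
chains of closed subspaces with summable errors yields a bijective linear
isometry between the Banach spaces. -/
theorem stmt_14 {X Y : Type*} [NormedAddCommGroup X] [NormedSpace ℝ X]
    [CompleteSpace X] [NormedAddCommGroup Y] [NormedSpace ℝ Y] [CompleteSpace Y]
    (ε : ℕ → ℝ) (hεpos : ∀ n, 0 < ε n) (hεsum : Summable ε)
    (A : ℕ → Submodule ℝ X) (hA : Monotone A)
    (hAclosed : ∀ n, IsClosed (A n : Set X))
    (hAdense : Dense (⋃ n, (A n : Set X)))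
    (B : ℕ → Submodule ℝ Y) (hB : Monotone B)
    (hBclosed : ∀ n, IsClosed (B n : Set Y))
    (hBdense : Dense (⋃ n, (B n : Set Y)))
    (f : ∀ n, A n →ₗ[ℝ] B n) (g : ∀ n, B n →ₗ[ℝ] A (n + 1))
    (hfnorm : ∀ n (a : A n), ‖f n a‖ ≤ ‖a‖)
    (hgnorm : ∀ n (b : B n), ‖g n b‖ ≤ ‖b‖)
    (hgf : ∀ n (a : A n), ‖((g n (f n a) : X)) - (a : X)‖ ≤ ε n * ‖a‖)
    (hfg : ∀ n (b : B n), ‖((f (n + 1) (g n b) : Y)) - (b : Y)‖ ≤ ε n * ‖b‖)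
    (hfstep : ∀ n (a : A n),
      ‖((f (n + 1) (Submodule.inclusion (hA (Nat.le_succ n)) a) : Y)) - ((f n a : Y))‖
        ≤ 2 * ε n * ‖a‖)
    (hgstep : ∀ n (b : B n),
      ‖((g (n + 1) (Submodule.inclusion (hB (Nat.le_succ n)) b) : X)) - ((g n b : X))‖
        ≤ 2 * ε n * ‖b‖) :
    ∃ F : X ≃ₗᵢ[ℝ] Y,
      (∀ m (a : A m),
        Tendsto (fun k : ℕ =>
            ((f (m + k) (Submodule.inclusion (hA (Nat.le_add_right m k)) a) : Y)))
          atTop (𝓝 (F (a : X)))) ∧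
      (∀ m (b : B m),
        Tendsto (fun k : ℕ =>
            ((g (m + k) (Submodule.inclusion (hB (Nat.le_add_right m k)) b) : X)))
          atTop (𝓝 (F.symm (b : Y)))) := by
  classical
  -- tail sums
  set T : ℕ → ℝ := fun m => ∑' k, ε (m + k) with hTdef
  have hεshift : ∀ m : ℕ, Summable fun k => ε (m + k) :=
    fun m => hεsum.comp_injective (add_right_injective m)
  have hT0 : Tendsto T atTop (𝓝 0) := by
    have h := tendsto_sum_nat_add ε
    have : T = fun i => ∑' k, ε (k + i) := by
      funext i; exact tsum_congr fun k => by rw [add_comm]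
    rw [this]; exact h
  have hTnn : ∀ m, 0 ≤ T m := fun m => tsum_nonneg fun k => (hεpos _).le
  -- the pointwise approximants
  set v : ℕ → X → Y := fun n x =>
    if h : x ∈ A n then ((f n ⟨x, h⟩ : B n) : Y) else 0 with hvdef
  set w : ℕ → Y → X := fun n y =>
    if h : y ∈ B n then ((g n ⟨y, h⟩ : A (n + 1)) : X) else 0 with hwdef
  have hv_eq : ∀ n x (h : x ∈ A n), v n x = ((f n ⟨x, h⟩ : B n) : Y) := by
    intro n x h; simp only [hvdef]; rw [dif_pos h]
  have hw_eq : ∀ n y (h : y ∈ B n), w n y = ((g n ⟨y, h⟩ : A (n + 1)) : X) := by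
    intro n y h; simp only [hwdef]; rw [dif_pos h]
  have hv_mem : ∀ n x (h : x ∈ A n), v n x ∈ B n := by
    intro n x h; rw [hv_eq n x h]; exact (f n ⟨x, h⟩).2
  have hw_mem : ∀ n y (h : y ∈ B n), w n y ∈ A (n + 1) := by
    intro n y h; rw [hw_eq n y h]; exact (g n ⟨y, h⟩).2
  have hv_norm : ∀ n x (h : x ∈ A n), ‖v n x‖ ≤ ‖x‖ := by
    intro n x h; rw [hv_eq n x h]; exact hfnorm n ⟨x, h⟩
  have hw_norm : ∀ n y (h : y ∈ B n), ‖w n y‖ ≤ ‖y‖ := by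
    intro n y h; rw [hw_eq n y h]; exact hgnorm n ⟨y, h⟩
  have hv_step : ∀ n x (h : x ∈ A n), ‖v (n + 1) x - v n x‖ ≤ 2 * ε n * ‖x‖ := by
    intro n x h
    have h1 : x ∈ A (n + 1) := hA (Nat.le_succ n) h
    rw [hv_eq (n + 1) x h1, hv_eq n x h]
    have e : (⟨x, h1⟩ : A (n + 1)) = Submodule.inclusion (hA (Nat.le_succ n)) ⟨x, h⟩ :=
      Subtype.ext rfl
    rw [e]
    exact hfstep n ⟨x, h⟩
  have hw_step : ∀ n y (h : y ∈ B n), ‖w (n + 1) y - w n y‖ ≤ 2 * ε n * ‖y‖ := by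
    intro n y h
    have h1 : y ∈ B (n + 1) := hB (Nat.le_succ n) h
    rw [hw_eq (n + 1) y h1, hw_eq n y h]
    have e : (⟨y, h1⟩ : B (n + 1)) = Submodule.inclusion (hB (Nat.le_succ n)) ⟨y, h⟩ :=
      Subtype.ext rfl
    rw [e]
    exact hgstep n ⟨y, h⟩
  -- summable bound for the shifted sequences
  have hsum_shift : ∀ (m : ℕ) (c : ℝ), Summable fun k => 2 * ε (m + k) * c :=
    fun m c => ((hεshift m).mul_left 2).mul_right c
  -- existence of limits
  have hv_lim : ∀ x m, x ∈ A m → ∃ L, Tendsto (fun n => v n x) atTop (𝓝 L) := by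
    intro x m hm
    have hm' : ∀ k, x ∈ A (m + k) := fun k => hA (Nat.le_add_right m k) hm
    have hc : CauchySeq (fun k => v (m + k) x) := by
      apply cauchySeq_of_dist_le_of_summable (fun k => 2 * ε (m + k) * ‖x‖) _
        (hsum_shift m ‖x‖)
      intro k
      rw [dist_eq_norm, norm_sub_rev]
      exact hv_step (m + k) x (hm' k)
    obtain ⟨L, hL⟩ := cauchySeq_tendsto_of_complete hc
    refine ⟨L, ?_⟩
    have he : (fun k => v (m + k) x) = fun k => v (k + m) x := by
      funext k; rw [add_comm]
    rw [he] at hL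
    exact (tendsto_add_atTop_iff_nat m).1 hL
  have hw_lim : ∀ y m, y ∈ B m → ∃ L, Tendsto (fun n => w n y) atTop (𝓝 L) := by
    intro y m hm
    have hm' : ∀ k, y ∈ B (m + k) := fun k => hB (Nat.le_add_right m k) hm
    have hc : CauchySeq (fun k => w (m + k) y) := by
      apply cauchySeq_of_dist_le_of_summable (fun k => 2 * ε (m + k) * ‖y‖) _
        (hsum_shift m ‖y‖)
      intro k
      rw [dist_eq_norm, norm_sub_rev]
      exact hw_step (m + k) y (hm' k)
    obtain ⟨L, hL⟩ := cauchySeq_tendsto_of_complete hc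
    refine ⟨L, ?_⟩
    have he : (fun k => w (m + k) y) = fun k => w (k + m) y := by
      funext k; rw [add_comm]
    rw [he] at hL
    exact (tendsto_add_atTop_iff_nat m).1 hL
  -- the limit maps
  set Φ : X → Y := fun x => limUnder atTop (fun n => v n x) with hΦdef
  set Ψ : Y → X := fun y => limUnder atTop (fun n => w n y) with hΨdef
  have hΦ : ∀ x m, x ∈ A m → Tendsto (fun n => v n x) atTop (𝓝 (Φ x)) := by
    intro x m hm
    obtain ⟨L, hL⟩ := hv_lim x m hm
    have : Φ x = L := hL.limUnder_eq
    rw [this]; exact hL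
  have hΨ : ∀ y m, y ∈ B m → Tendsto (fun n => w n y) atTop (𝓝 (Ψ y)) := by
    intro y m hm
    obtain ⟨L, hL⟩ := hw_lim y m hm
    have : Ψ y = L := hL.limUnder_eq
    rw [this]; exact hL
  -- gap estimates
  have hΦgap : ∀ m x (h : x ∈ A m), dist (v m x) (Φ x) ≤ 2 * T m * ‖x‖ := by
    intro m x h
    have hm' : ∀ k, x ∈ A (m + k) := fun k => hA (Nat.le_add_right m k) h
    have htend : Tendsto (fun k => v (m + k) x) atTop (𝓝 (Φ x)) := by
      have he : (fun k => v (m + k) x) = fun k => v (k + m) x := by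
        funext k; rw [add_comm]
      rw [he]
      exact (tendsto_add_atTop_iff_nat m).2 (hΦ x m h)
    have := dist_le_tsum_of_dist_le_of_tendsto₀ (f := fun k => v (m + k) x)
      (fun k => 2 * ε (m + k) * ‖x‖)
      (fun k => by
        rw [dist_eq_norm, norm_sub_rev]
        exact hv_step (m + k) x (hm' k))
      (hsum_shift m ‖x‖) htend
    calc dist (v m x) (Φ x) = dist (v (m + 0) x) (Φ x) := by norm_num
      _ ≤ ∑' k, 2 * ε (m + k) * ‖x‖ := this
      _ = 2 * T m * ‖x‖ := by
          rw [tsum_mul_right, hTdef]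
          rw [show (fun k => 2 * ε (m + k)) = fun k => 2 * (fun k => ε (m + k)) k from rfl]
          rw [tsum_mul_left]
  have hΨgap : ∀ m y (h : y ∈ B m), dist (w m y) (Ψ y) ≤ 2 * T m * ‖y‖ := by
    intro m y h
    have hm' : ∀ k, y ∈ B (m + k) := fun k => hB (Nat.le_add_right m k) h
    have htend : Tendsto (fun k => w (m + k) y) atTop (𝓝 (Ψ y)) := by
      have he : (fun k => w (m + k) y) = fun k => w (k + m) y := by
        funext k; rw [add_comm]
      rw [he]
      exact (tendsto_add_atTop_iff_nat m).2 (hΨ y m h)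
    have := dist_le_tsum_of_dist_le_of_tendsto₀ (f := fun k => w (m + k) y)
      (fun k => 2 * ε (m + k) * ‖y‖)
      (fun k => by
        rw [dist_eq_norm, norm_sub_rev]
        exact hw_step (m + k) y (hm' k))
      (hsum_shift m ‖y‖) htend
    calc dist (w m y) (Ψ y) = dist (w (m + 0) y) (Ψ y) := by norm_num
      _ ≤ ∑' k, 2 * ε (m + k) * ‖y‖ := this
      _ = 2 * T m * ‖y‖ := by
          rw [tsum_mul_right, hTdef]
          rw [show (fun k => 2 * ε (m + k)) = fun k => 2 * (fun k => ε (m + k)) k from rfl]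
          rw [tsum_mul_left]
  -- norm bounds on limits
  have hΦnorm : ∀ x m, x ∈ A m → ‖Φ x‖ ≤ ‖x‖ := by
    intro x m hm
    refine le_of_tendsto (hΦ x m hm).norm ?_
    filter_upwards [eventually_ge_atTop m] with n hn
    exact hv_norm n x (hA hn hm)
  have hΨnorm : ∀ y m, y ∈ B m → ‖Ψ y‖ ≤ ‖y‖ := by
    intro y m hm
    refine le_of_tendsto (hΨ y m hm).norm ?_
    filter_upwards [eventually_ge_atTop m] with n hn
    exact hw_norm n y (hB hn hm)
  -- additivity / homogeneity on the unions
  have hΦadd : ∀ x y mx my, x ∈ A mx → y ∈ A my → Φ (x + y) = Φ x + Φ y := by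
    intro x y mx my hx hy
    set m := max mx my
    have hx' : x ∈ A m := hA (le_max_left _ _) hx
    have hy' : y ∈ A m := hA (le_max_right _ _) hy
    have hxy : x + y ∈ A m := add_mem hx' hy'
    refine tendsto_nhds_unique (hΦ (x + y) m hxy) ?_
    have h1 : Tendsto (fun n => v n x + v n y) atTop (𝓝 (Φ x + Φ y)) :=
      (hΦ x m hx').add (hΦ y m hy')
    refine h1.congr' ?_
    filter_upwards [eventually_ge_atTop m] with n hn
    have hxn : x ∈ A n := hA hn hx'
    have hyn : y ∈ A n := hA hn hy'
    have hxyn : x + y ∈ A n := add_mem hxn hyn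
    rw [hv_eq n x hxn, hv_eq n y hyn, hv_eq n (x + y) hxyn]
    have e : (⟨x + y, hxyn⟩ : A n) = ⟨x, hxn⟩ + ⟨y, hyn⟩ := rfl
    rw [e, map_add]
    rfl
  have hΦsmul : ∀ (c : ℝ) x mx, x ∈ A mx → Φ (c • x) = c • Φ x := by
    intro c x mx hx
    have hcx : c • x ∈ A mx := (A mx).smul_mem c hx
    refine tendsto_nhds_unique (hΦ (c • x) mx hcx) ?_
    have h1 : Tendsto (fun n => c • v n x) atTop (𝓝 (c • Φ x)) :=
      (hΦ x mx hx).const_smul c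
    refine h1.congr' ?_
    filter_upwards [eventually_ge_atTop mx] with n hn
    have hxn : x ∈ A n := hA hn hx
    have hcxn : c • x ∈ A n := (A n).smul_mem c hxn
    rw [hv_eq n x hxn, hv_eq n (c • x) hcxn]
    have e : (⟨c • x, hcxn⟩ : A n) = c • ⟨x, hxn⟩ := rfl
    rw [e, map_smul]
    rfl
  have hΨadd : ∀ x y mx my, x ∈ B mx → y ∈ B my → Ψ (x + y) = Ψ x + Ψ y := by
    intro x y mx my hx hy
    set m := max mx my
    have hx' : x ∈ B m := hB (le_max_left _ _) hx
    have hy' : y ∈ B m := hB (le_max_right _ _) hy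
    have hxy : x + y ∈ B m := add_mem hx' hy'
    refine tendsto_nhds_unique (hΨ (x + y) m hxy) ?_
    have h1 : Tendsto (fun n => w n x + w n y) atTop (𝓝 (Ψ x + Ψ y)) :=
      (hΨ x m hx').add (hΨ y m hy')
    refine h1.congr' ?_
    filter_upwards [eventually_ge_atTop m] with n hn
    have hxn : x ∈ B n := hB hn hx'
    have hyn : y ∈ B n := hB hn hy'
    have hxyn : x + y ∈ B n := add_mem hxn hyn
    rw [hw_eq n x hxn, hw_eq n y hyn, hw_eq n (x + y) hxyn]
    have e : (⟨x + y, hxyn⟩ : B n) = ⟨x, hxn⟩ + ⟨y, hyn⟩ := rfl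
    rw [e, map_add]
    rfl
  have hΨsmul : ∀ (c : ℝ) y my, y ∈ B my → Ψ (c • y) = c • Ψ y := by
    intro c y my hy
    have hcy : c • y ∈ B my := (B my).smul_mem c hy
    refine tendsto_nhds_unique (hΨ (c • y) my hcy) ?_
    have h1 : Tendsto (fun n => c • w n y) atTop (𝓝 (c • Ψ y)) :=
      (hΨ y my hy).const_smul c
    refine h1.congr' ?_
    filter_upwards [eventually_ge_atTop my] with n hn
    have hyn : y ∈ B n := hB hn hy
    have hcyn : c • y ∈ B n := (B n).smul_mem c hyn
    rw [hw_eq n y hyn, hw_eq n (c • y) hcyn]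
    have e : (⟨c • y, hcyn⟩ : B n) = c • ⟨y, hyn⟩ := rfl
    rw [e, map_smul]
    rfl
  -- the dense subspaces
  set SA : Submodule ℝ X := ⨆ n, A n with hSAdef
  set SB : Submodule ℝ Y := ⨆ n, B n with hSBdef
  have hSAmem : ∀ x : X, x ∈ SA ↔ ∃ n, x ∈ A n := fun x =>
    Submodule.mem_iSup_of_chain ⟨A, hA⟩ x
  have hSBmem : ∀ y : Y, y ∈ SB ↔ ∃ n, y ∈ B n := fun y =>
    Submodule.mem_iSup_of_chain ⟨B, hB⟩ y
  have hSAcoe : (SA : Set X) = ⋃ n, (A n : Set X) :=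
    Submodule.coe_iSup_of_chain ⟨A, hA⟩
  have hSBcoe : (SB : Set Y) = ⋃ n, (B n : Set Y) :=
    Submodule.coe_iSup_of_chain ⟨B, hB⟩
  -- the continuous linear maps on the dense subspaces
  set Φlin : SA →ₗ[ℝ] Y :=
    { toFun := fun s => Φ (s : X)
      map_add' := by
        intro s t
        obtain ⟨ms, hs⟩ := (hSAmem s).1 s.2
        obtain ⟨mt, ht⟩ := (hSAmem t).1 t.2
        exact hΦadd _ _ ms mt hs ht
      map_smul' := by
        intro c s
        obtain ⟨ms, hs⟩ := (hSAmem s).1 s.2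
        exact hΦsmul c _ ms hs } with hΦlindef
  set Ψlin : SB →ₗ[ℝ] X :=
    { toFun := fun s => Ψ (s : Y)
      map_add' := by
        intro s t
        obtain ⟨ms, hs⟩ := (hSBmem s).1 s.2
        obtain ⟨mt, ht⟩ := (hSBmem t).1 t.2
        exact hΨadd _ _ ms mt hs ht
      map_smul' := by
        intro c s
        obtain ⟨ms, hs⟩ := (hSBmem s).1 s.2
        exact hΨsmul c _ ms hs } with hΨlindef
  set ΦL : SA →L[ℝ] Y := Φlin.mkContinuous 1 (by
    intro s
    obtain ⟨ms, hs⟩ := (hSAmem s).1 s.2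
    rw [one_mul]
    exact hΦnorm _ ms hs) with hΦLdef
  set ΨL : SB →L[ℝ] X := Ψlin.mkContinuous 1 (by
    intro s
    obtain ⟨ms, hs⟩ := (hSBmem s).1 s.2
    rw [one_mul]
    exact hΨnorm _ ms hs) with hΨLdef
  -- extensions
  have hSAdense : DenseRange (SA.subtypeL) := by
    show DenseRange ((↑) : SA → X)
    rw [denseRange_iff_closure_range, Subtype.range_coe, hSAcoe]
    exact hAdense.closure_eq
  have hSBdense : DenseRange (SB.subtypeL) := by
    show DenseRange ((↑) : SB → Y)
    rw [denseRange_iff_closure_range, Subtype.range_coe, hSBcoe]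
    exact hBdense.closure_eq
  have hSAind : IsUniformInducing (SA.subtypeL : SA →L[ℝ] X) :=
    isUniformEmbedding_subtype_val.isUniformInducing
  have hSBind : IsUniformInducing (SB.subtypeL : SB →L[ℝ] Y) :=
    isUniformEmbedding_subtype_val.isUniformInducing
  set F : X →L[ℝ] Y := ΦL.extend SA.subtypeL with hFdef
  set G : Y →L[ℝ] X := ΨL.extend SB.subtypeL with hGdef
  have hFeq : ∀ x m, x ∈ A m → F x = Φ x := by
    intro x m hm
    have hx : x ∈ SA := (hSAmem x).2 ⟨m, hm⟩
    have := ContinuousLinearMap.extend_eq ΦL hSAdense hSAind ⟨x, hx⟩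
    simpa [hFdef, hΦLdef, hΦlindef] using this
  have hGeq : ∀ y m, y ∈ B m → G y = Ψ y := by
    intro y m hm
    have hy : y ∈ SB := (hSBmem y).2 ⟨m, hm⟩
    have := ContinuousLinearMap.extend_eq ΨL hSBdense hSBind ⟨y, hy⟩
    simpa [hGdef, hΨLdef, hΨlindef] using this
  -- left inverse on the union
  have hGF : ∀ x m, x ∈ A m → G (F x) = x := by
    intro x m hm
    rw [hFeq x m hm]
    have h1 : Tendsto (fun n => v n x) atTop (𝓝 (Φ x)) := hΦ x m hm
    have h2 : Tendsto (fun n => G (v n x)) atTop (𝓝 (G (Φ x))) :=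
      (G.continuous.tendsto _).comp h1
    have h3 : Tendsto (fun n => G (v n x)) atTop (𝓝 x) := by
      rw [tendsto_iff_norm_sub_tendsto_zero]
      apply squeeze_zero_norm' (a := fun n => (2 * T n + ε n) * ‖x‖)
      · filter_upwards [eventually_ge_atTop m] with n hn
        have hxn : x ∈ A n := hA hn hm
        have hyB : v n x ∈ B n := hv_mem n x hxn
        rw [norm_norm]
        have e0 : G (v n x) = Ψ (v n x) := hGeq _ n hyB
        have e1 : ‖Ψ (v n x) - w n (v n x)‖ ≤ 2 * T n * ‖v n x‖ := by
          rw [norm_sub_rev, ← dist_eq_norm]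
          exact hΨgap n (v n x) hyB
        have e2 : ‖w n (v n x) - x‖ ≤ ε n * ‖x‖ := by
          rw [hw_eq n (v n x) hyB]
          have e : (⟨v n x, hyB⟩ : B n) = f n ⟨x, hxn⟩ :=
            Subtype.ext (hv_eq n x hxn)
          rw [e]
          exact hgf n ⟨x, hxn⟩
        calc ‖G (v n x) - x‖
            ≤ ‖Ψ (v n x) - w n (v n x)‖ + ‖w n (v n x) - x‖ := by
              rw [e0]
              exact norm_sub_le_norm_sub_add_norm_sub _ _ _
          _ ≤ 2 * T n * ‖v n x‖ + ε n * ‖x‖ := add_le_add e1 e2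
          _ ≤ 2 * T n * ‖x‖ + ε n * ‖x‖ := by
              refine add_le_add_left (mul_le_mul_of_nonneg_left
                (hv_norm n x hxn) (by have := hTnn n; linarith)) _
          _ = (2 * T n + ε n) * ‖x‖ := by ring
      · have : Tendsto (fun n => 2 * T n + ε n) atTop (𝓝 0) := by
          have h2' : Tendsto (fun n => 2 * T n) atTop (𝓝 (2 * 0)) := hT0.const_mul 2
          have h3' := hεsum.tendsto_atTop_zero
          simpa using h2'.add h3'
        simpa using this.mul_const ‖x‖
    exact tendsto_nhds_unique h2 h3
  -- right inverse on the union
  have hFG : ∀ y m, y ∈ B m → F (G y) = y := by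
    intro y m hm
    rw [hGeq y m hm]
    have h1 : Tendsto (fun n => w n y) atTop (𝓝 (Ψ y)) := hΨ y m hm
    have h2 : Tendsto (fun n => F (w n y)) atTop (𝓝 (F (Ψ y))) :=
      (F.continuous.tendsto _).comp h1
    have h3 : Tendsto (fun n => F (w n y)) atTop (𝓝 y) := by
      rw [tendsto_iff_norm_sub_tendsto_zero]
      apply squeeze_zero_norm' (a := fun n => (2 * T (n + 1) + ε n) * ‖y‖)
      · filter_upwards [eventually_ge_atTop m] with n hn
        have hyn : y ∈ B n := hB hn hm
        have hxA : w n y ∈ A (n + 1) := hw_mem n y hyn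
        rw [norm_norm]
        have e0 : F (w n y) = Φ (w n y) := hFeq _ (n + 1) hxA
        have e1 : ‖Φ (w n y) - v (n + 1) (w n y)‖ ≤ 2 * T (n + 1) * ‖w n y‖ := by
          rw [norm_sub_rev, ← dist_eq_norm]
          exact hΦgap (n + 1) (w n y) hxA
        have e2 : ‖v (n + 1) (w n y) - y‖ ≤ ε n * ‖y‖ := by
          rw [hv_eq (n + 1) (w n y) hxA]
          have e : (⟨w n y, hxA⟩ : A (n + 1)) = g n ⟨y, hyn⟩ :=
            Subtype.ext (hw_eq n y hyn)
          rw [e]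
          exact hfg n ⟨y, hyn⟩
        calc ‖F (w n y) - y‖
            ≤ ‖Φ (w n y) - v (n + 1) (w n y)‖ + ‖v (n + 1) (w n y) - y‖ := by
              rw [e0]
              exact norm_sub_le_norm_sub_add_norm_sub _ _ _
          _ ≤ 2 * T (n + 1) * ‖w n y‖ + ε n * ‖y‖ := add_le_add e1 e2
          _ ≤ 2 * T (n + 1) * ‖y‖ + ε n * ‖y‖ := by
              refine add_le_add_left (mul_le_mul_of_nonneg_left
                (hw_norm n y hyn) (by have := hTnn (n + 1); linarith)) _
          _ = (2 * T (n + 1) + ε n) * ‖y‖ := by ring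
      · have hTs : Tendsto (fun n => T (n + 1)) atTop (𝓝 0) :=
          (tendsto_add_atTop_iff_nat 1).2 hT0
        have : Tendsto (fun n => 2 * T (n + 1) + ε n) atTop (𝓝 0) := by
          have h2' : Tendsto (fun n => 2 * T (n + 1)) atTop (𝓝 (2 * 0)) := hTs.const_mul 2
          have h3' := hεsum.tendsto_atTop_zero
          simpa using h2'.add h3'
        simpa using this.mul_const ‖y‖
    exact tendsto_nhds_unique h2 h3
  -- globalize by density
  have hGF_all : ∀ x, G (F x) = x := by
    have heq : (fun x => G (F x)) = (id : X → X) := by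
      apply Continuous.ext_on hAdense (G.continuous.comp F.continuous) continuous_id
      intro x hx
      obtain ⟨s, ⟨n, rfl⟩, hxs⟩ := hx
      exact hGF x n hxs
    intro x; exact congrFun heq x
  have hFG_all : ∀ y, F (G y) = y := by
    have heq : (fun y => F (G y)) = (id : Y → Y) := by
      apply Continuous.ext_on hBdense (F.continuous.comp G.continuous) continuous_id
      intro y hy
      obtain ⟨s, ⟨n, rfl⟩, hys⟩ := hy
      exact hFG y n hys
    intro y; exact congrFun heq y
  -- norm bounds everywhere
  have hFle : ∀ x, ‖F x‖ ≤ ‖x‖ := by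
    have hclosed : IsClosed {x : X | ‖F x‖ ≤ ‖x‖} :=
      isClosed_le (F.continuous.norm) continuous_norm
    have hsub : (⋃ n, (A n : Set X)) ⊆ {x : X | ‖F x‖ ≤ ‖x‖} := by
      intro x hx
      obtain ⟨s, ⟨n, rfl⟩, hxs⟩ := hx
      show ‖F x‖ ≤ ‖x‖
      rw [hFeq x n hxs]
      exact hΦnorm x n hxs
    intro x
    have hx : x ∈ closure (⋃ n, (A n : Set X)) := hAdense x
    exact (hclosed.closure_subset_iff.2 hsub) hx
  have hGle : ∀ y, ‖G y‖ ≤ ‖y‖ := by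
    have hclosed : IsClosed {y : Y | ‖G y‖ ≤ ‖y‖} :=
      isClosed_le (G.continuous.norm) continuous_norm
    have hsub : (⋃ n, (B n : Set Y)) ⊆ {y : Y | ‖G y‖ ≤ ‖y‖} := by
      intro y hy
      obtain ⟨s, ⟨n, rfl⟩, hys⟩ := hy
      show ‖G y‖ ≤ ‖y‖
      rw [hGeq y n hys]
      exact hΨnorm y n hys
    intro y
    have hy : y ∈ closure (⋃ n, (B n : Set Y)) := hBdense y
    exact (hclosed.closure_subset_iff.2 hsub) hy
  have hFnorm_eq : ∀ x, ‖F x‖ = ‖x‖ := by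
    intro x
    refine le_antisymm (hFle x) ?_
    calc ‖x‖ = ‖G (F x)‖ := by rw [hGF_all x]
      _ ≤ ‖F x‖ := hGle _
  -- assemble the isometry
  set e : X ≃ₗ[ℝ] Y := LinearEquiv.ofLinear (F : X →ₗ[ℝ] Y) (G : Y →ₗ[ℝ] X)
    (LinearMap.ext fun y => hFG_all y) (LinearMap.ext fun x => hGF_all x) with hedef
  have he_apply : ∀ x, e x = F x := fun x => rfl
  have he_symm : ∀ y, e.symm y = G y := fun y => rfl
  set Fiso : X ≃ₗᵢ[ℝ] Y := ⟨e, fun x => hFnorm_eq x⟩ with hFisodef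
  have hFiso_apply : ∀ x, Fiso x = F x := fun x => rfl
  have hFiso_symm : ∀ y, Fiso.symm y = G y := fun y => rfl
  refine ⟨Fiso, ?_, ?_⟩
  · intro m a
    have hma : (a : X) ∈ A m := a.2
    have hgoal : (fun k : ℕ =>
        ((f (m + k) (Submodule.inclusion (hA (Nat.le_add_right m k)) a) : B (m + k)) : Y))
        = fun k => v (m + k) (a : X) := by
      funext k
      have hmem : (a : X) ∈ A (m + k) := hA (Nat.le_add_right m k) hma
      rw [hv_eq (m + k) (a : X) hmem]
      congr 1
    rw [hgoal, hFiso_apply, hFeq (a : X) m hma]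
    have he : (fun k => v (m + k) (a : X)) = fun k => v (k + m) (a : X) := by
      funext k; rw [add_comm]
    rw [he]
    exact (tendsto_add_atTop_iff_nat m).2 (hΦ (a : X) m hma)
  · intro m b
    have hmb : (b : Y) ∈ B m := b.2
    have hgoal : (fun k : ℕ =>
        ((g (m + k) (Submodule.inclusion (hB (Nat.le_add_right m k)) b) : A (m + k + 1)) : X))
        = fun k => w (m + k) (b : Y) := by
      funext k
      have hmem : (b : Y) ∈ B (m + k) := hB (Nat.le_add_right m k) hmb
      rw [hw_eq (m + k) (b : Y) hmem]
      congr 1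
    rw [hgoal, hFiso_symm, hGeq (b : Y) m hmb]
    have he : (fun k => w (m + k) (b : Y)) = fun k => w (k + m) (b : Y) := by
      funext k; rw [add_comm]
    rw [he]
    exact (tendsto_add_atTop_iff_nat m).2 (hΨ (b : Y) m hmb)
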